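/- arXiv:2005.14660 — 5 statements merged into one kernel-verified Lean document; each statement's English description precedes it below -/
import Mathlib

section
/- For all t, s ∈ (0,∞) with t ≠ s, the partial derivative of G with respect to its first variable satisfies |∂G/∂t (t,s)| ≤ (c/p(t))·G(s,s), where c := max{a₁,a₂}/min{b₁,b₂}. -/
open MeasureTheory Set Filter Topology

theorem stmt_7
    (p : ℝ → ℝ)
    (hp_cont : ContinuousOn p (Ici 0))
    (hp_pos : ∀ t ∈ Ici (0:ℝ), 0 < p t)
    (hp_int : IntegrableOn (fun s => 1 / p s) (Ici 0))
    (a₁ a₂ b₁ b₂ D : ℝ)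
    (ha₁ : 0 ≤ a₁) (ha₂ : 0 ≤ a₂) (hb₁ : 0 ≤ b₁) (hb₂ : 0 ≤ b₂)
    (hD : D = a₂ * b₁ + a₁ * b₂ + a₁ * a₂ * ∫ σ in Ici (0:ℝ), 1 / p σ)
    (hDpos : 0 < D)
    (θ φ : ℝ → ℝ)
    (hθ : ∀ t, θ t = b₁ + a₁ * ∫ σ in (0:ℝ)..t, 1 / p σ)
    (hφ : ∀ t, φ t = b₂ + a₂ * ∫ σ in Ici t, 1 / p σ)
    (G : ℝ → ℝ → ℝ)
    (hG : ∀ t s, G t s = (1 / D) * (θ (min t s) * φ (max t s)))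
    (hb₁' : 0 < b₁) (hb₂' : 0 < b₂)
    (c : ℝ) (hc : c = max a₁ a₂ / min b₁ b₂)
    :
    ∀ t > 0, ∀ s > 0, t ≠ s → ∀ g', HasDerivAt (fun τ => G τ s) g' t →
      |g'| ≤ c / p t * G s s
    := by
  intro t ht s hs hts g' hg'
  -- Continuity of 1/p on Ioi 0
  have hinv_cont : ContinuousOn (fun σ => 1 / p σ) (Ioi 0) :=
    continuousOn_const.div (hp_cont.mono Ioi_subset_Ici_self)
      (fun x hx => ne_of_gt (hp_pos x (mem_Ici.mpr (le_of_lt (mem_Ioi.mp hx)))))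
  have hpt : 0 < p t := hp_pos t (le_of_lt ht)
  -- FTC: derivative of the primitive of 1/p at t
  have huIcc : uIcc (0:ℝ) t ⊆ Ici 0 := by
    rw [uIcc_of_le (le_of_lt ht)]; exact Icc_subset_Ici_self
  have hii : IntervalIntegrable (fun σ => 1 / p σ) volume 0 t :=
    (hp_int.mono_set huIcc).intervalIntegrable
  have hmeas : StronglyMeasurableAtFilter (fun σ => 1 / p σ) (𝓝 t) :=
    hinv_cont.stronglyMeasurableAtFilter isOpen_Ioi t ht
  have hcat : ContinuousAt (fun σ => 1 / p σ) t :=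
    hinv_cont.continuousAt (Ioi_mem_nhds ht)
  have hprim : HasDerivAt (fun τ => ∫ σ in (0:ℝ)..τ, 1 / p σ) (1 / p t) t :=
    intervalIntegral.integral_hasDerivAt_right hii hmeas hcat
  -- splitting lemma for the tail integral
  have hsplit : ∀ τ : ℝ, 0 ≤ τ →
      (∫ σ in Ici τ, 1 / p σ) = (∫ σ in Ici (0:ℝ), 1 / p σ) - ∫ σ in (0:ℝ)..τ, 1 / p σ := by
    intro τ hτ
    rw [intervalIntegral.integral_of_le hτ, integral_Ici_eq_integral_Ioi,
      integral_Ici_eq_integral_Ioi]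
    have hu : Ioc (0:ℝ) τ ∪ Ioi τ = Ioi 0 := Ioc_union_Ioi_eq_Ioi hτ
    have := setIntegral_union (Ioc_disjoint_Ioi (le_refl τ)) measurableSet_Ioi
      (hp_int.mono_set (Ioc_subset_Icc_self.trans (Icc_subset_Ici_self)))
      (hp_int.mono_set (fun x hx => le_trans hτ (le_of_lt hx)))
      (f := fun σ => 1 / p σ) (μ := volume)
    rw [hu] at this
    rw [this]; ring
  -- nonnegativity facts
  have hint_nonneg : (0:ℝ) ≤ ∫ σ in (0:ℝ)..s, 1 / p σ := by
    apply intervalIntegral.integral_nonneg (le_of_lt hs)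
    intro u hu
    exact le_of_lt (div_pos one_pos (hp_pos u hu.1))
  have htail_nonneg : ∀ τ : ℝ, 0 ≤ τ → (0:ℝ) ≤ ∫ σ in Ici τ, 1 / p σ := by
    intro τ hτ
    apply setIntegral_nonneg measurableSet_Ici
    intro x hx
    exact le_of_lt (div_pos one_pos (hp_pos x (le_trans hτ hx)))
  have hθs : min b₁ b₂ ≤ θ s := by
    rw [hθ]
    have : min b₁ b₂ ≤ b₁ := min_le_left _ _
    nlinarith [mul_nonneg ha₁ hint_nonneg]
  have hφs : min b₁ b₂ ≤ φ s := by
    rw [hφ]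
    have : min b₁ b₂ ≤ b₂ := min_le_right _ _
    nlinarith [mul_nonneg ha₂ (htail_nonneg s (le_of_lt hs))]
  have hminb : (0:ℝ) < min b₁ b₂ := lt_min hb₁' hb₂'
  have hθs0 : 0 ≤ θ s := le_trans (le_of_lt hminb) hθs
  have hφs0 : 0 ≤ φ s := le_trans (le_of_lt hminb) hφs
  have hcmin : c * min b₁ b₂ = max a₁ a₂ := by
    rw [hc, div_mul_cancel₀ _ (ne_of_gt hminb)]
  have hc0 : 0 ≤ c := by
    rw [hc]; exact div_nonneg (le_trans ha₁ (le_max_left _ _)) (le_of_lt hminb)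
  have hGss : G s s = (1 / D) * (θ s * φ s) := by rw [hG, min_self, max_self]
  rcases lt_or_gt_of_ne hts with hlt | hgt
  · -- t < s : G τ s = (1/D) * (θ τ * φ s) near t
    have hd : HasDerivAt (fun τ => (1 / D) * ((b₁ + a₁ * ∫ σ in (0:ℝ)..τ, 1 / p σ) * φ s))
        ((1 / D) * ((a₁ * (1 / p t)) * φ s)) t := by
      exact (((hprim.const_mul a₁).const_add b₁).mul_const (φ s)).const_mul (1 / D)
    have heq : (fun τ => (1 / D) * ((b₁ + a₁ * ∫ σ in (0:ℝ)..τ, 1 / p σ) * φ s))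
        =ᶠ[𝓝 t] (fun τ => G τ s) := by
      filter_upwards [Iio_mem_nhds hlt] with τ hτ
      rw [hG, min_eq_left (le_of_lt hτ), max_eq_right (le_of_lt hτ), hθ]
    have hd' : HasDerivAt (fun τ => G τ s) ((1 / D) * ((a₁ * (1 / p t)) * φ s)) t :=
      hd.congr_of_eventuallyEq heq.symm
    have hgeq : g' = (1 / D) * ((a₁ * (1 / p t)) * φ s) := hg'.unique hd'
    rw [hgeq, hGss, abs_of_nonneg]
    · have ha₁c : a₁ ≤ c * θ s := by
        calc a₁ ≤ max a₁ a₂ := le_max_left _ _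
        _ = c * min b₁ b₂ := hcmin.symm
        _ ≤ c * θ s := by exact mul_le_mul_of_nonneg_left hθs hc0
      have h1 : (0:ℝ) < 1 / D := by positivity
      have h2 : (0:ℝ) ≤ 1 / p t := le_of_lt (by positivity)
      rw [div_eq_mul_one_div c (p t)]
      nlinarith [mul_nonneg hφs0 h2, mul_nonneg (mul_nonneg hφs0 h2) (le_of_lt h1)]
    · positivity
  · -- t > s : G τ s = (1/D) * (θ s * φ τ) near t
    set I : ℝ := ∫ σ in Ici (0:ℝ), 1 / p σ with hI
    have hd : HasDerivAt (fun τ => (1 / D) * (θ s * ((b₂ + a₂ * I) - a₂ * ∫ σ in (0:ℝ)..τ, 1 / p σ)))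
        ((1 / D) * (θ s * (-(a₂ * (1 / p t))))) t := by
      have := ((((hprim.const_mul a₂).neg).const_add (b₂ + a₂ * I)).const_mul (θ s)).const_mul (1 / D)
      convert this using 2 <;> first | rfl | (simp only [Pi.neg_apply]; ring)
    have heq : (fun τ => (1 / D) * (θ s * ((b₂ + a₂ * I) - a₂ * ∫ σ in (0:ℝ)..τ, 1 / p σ)))
        =ᶠ[𝓝 t] (fun τ => G τ s) := by
      filter_upwards [Ioi_mem_nhds hgt] with τ hτ
      rw [hG, min_eq_right (le_of_lt hτ), max_eq_left (le_of_lt hτ), hφ,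
        hsplit τ (le_of_lt (lt_trans hs hτ))]
      ring
    have hd' : HasDerivAt (fun τ => G τ s) ((1 / D) * (θ s * (-(a₂ * (1 / p t))))) t :=
      hd.congr_of_eventuallyEq heq.symm
    have hgeq : g' = (1 / D) * (θ s * (-(a₂ * (1 / p t)))) := hg'.unique hd'
    have habs : |g'| = (1 / D) * (θ s * (a₂ * (1 / p t))) := by
      rw [hgeq]
      have h2 : (0:ℝ) ≤ 1 / p t := le_of_lt (by positivity)
      have hnn : 0 ≤ 1 / D * (θ s * (a₂ * (1 / p t))) :=
        mul_nonneg (by positivity) (mul_nonneg hθs0 (mul_nonneg ha₂ h2))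
      have hre : 1 / D * (θ s * -(a₂ * (1 / p t))) = -(1 / D * (θ s * (a₂ * (1 / p t)))) := by ring
      rw [abs_of_nonpos (by rw [hre]; linarith)]
      ring
    rw [habs, hGss]
    have ha₂c : a₂ ≤ c * φ s := by
      calc a₂ ≤ max a₁ a₂ := le_max_right _ _
      _ = c * min b₁ b₂ := hcmin.symm
      _ ≤ c * φ s := mul_le_mul_of_nonneg_left hφs hc0
    have h1 : (0:ℝ) < 1 / D := by positivity
    have h2 : (0:ℝ) ≤ 1 / p t := le_of_lt (by positivity)
    rw [div_eq_mul_one_div c (p t)]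
    nlinarith [mul_nonneg hθs0 h2, mul_nonneg (mul_nonneg hθs0 h2) (le_of_lt h1)]
end

section
/- The function x(t) := ∫₀^∞ G(t,s)·p(s)·σ(s) ds is continuous on [0,∞) and differentiable at every t ∈ (0,∞), with p(t)·x'(t) = (1/D)·(a₁·∫ₜ^∞ φ(s)·p(s)·σ(s) ds − a₂·∫₀ᵗ θ(s)·p(s)·σ(s) ds); consequently p·x' is differentiable on (0,∞) and (p(t)·x'(t))' = −p(t)·σ(t) for every t > 0, i.e. x solves (1/p)(p x')' + σ = 0 on (0,∞). -/
open MeasureTheory Set Filter Topology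

private lemma split_integral (f : ℝ → ℝ) (hf : IntegrableOn f (Ici 0)) {t : ℝ} (ht : 0 ≤ t) :
    (∫ s in Ici (0:ℝ), f s) = (∫ s in (0:ℝ)..t, f s) + ∫ s in Ici t, f s := by
  rw [integral_Ici_eq_integral_Ioi, integral_Ici_eq_integral_Ioi,
    intervalIntegral.integral_of_le ht,
    ← setIntegral_union Ioc_disjoint_Ioi_same measurableSet_Ioi
      (hf.mono_set (fun s hs => le_of_lt hs.1))
      (hf.mono_set (fun s hs => ht.trans (le_of_lt hs))),
    Ioc_union_Ioi_eq_Ioi ht]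

private lemma ftc_aux (u : ℝ → ℝ) (hui : Integrable ((Ici (0:ℝ)).indicator u))
    (huc : ContinuousOn u (Ici 0)) {t : ℝ} (ht : 0 < t) :
    HasDerivAt (fun τ => ∫ s in (0:ℝ)..τ, (Ici (0:ℝ)).indicator u s) (u t) t := by
  have hmem : Ici (0:ℝ) ∈ 𝓝 t := Ici_mem_nhds ht
  have hcongr : (Ici (0:ℝ)).indicator u =ᶠ[𝓝 t] u :=
    eventually_of_mem hmem (fun s hs => indicator_of_mem hs u)
  have hct : ContinuousAt ((Ici (0:ℝ)).indicator u) t :=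
    (huc.continuousAt hmem).congr hcongr.symm
  have h := intervalIntegral.integral_hasDerivAt_right (a := (0:ℝ)) (hui.intervalIntegrable)
    (hui.aestronglyMeasurable.stronglyMeasurableAtFilter) hct
  rwa [indicator_of_mem (mem_Ici.mpr ht.le)] at h

theorem stmt_14
    (p : ℝ → ℝ)
    (hp_cont : ContinuousOn p (Ici 0))
    (hp_pos : ∀ t ∈ Ici (0:ℝ), 0 < p t)
    (hp_int : IntegrableOn (fun s => 1 / p s) (Ici 0))
    (a₁ a₂ b₁ b₂ D : ℝ)
    (ha₁ : 0 ≤ a₁) (ha₂ : 0 ≤ a₂) (hb₁ : 0 ≤ b₁) (hb₂ : 0 ≤ b₂)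
    (hD : D = a₂ * b₁ + a₁ * b₂ + a₁ * a₂ * ∫ σ in Ici (0:ℝ), 1 / p σ)
    (hDpos : 0 < D)
    (θ φ : ℝ → ℝ)
    (hθ : ∀ t, θ t = b₁ + a₁ * ∫ σ in (0:ℝ)..t, 1 / p σ)
    (hφ : ∀ t, φ t = b₂ + a₂ * ∫ σ in Ici t, 1 / p σ)
    (G : ℝ → ℝ → ℝ)
    (hG : ∀ t s, G t s = (1 / D) * (θ (min t s) * φ (max t s)))
    (hb₁' : 0 < b₁) (hb₂' : 0 < b₂)
    (q : ℝ → ℝ)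
    (hq_cont : ContinuousOn q (Ici 0))
    (hq_nonneg : ∀ s ∈ Ici (0:ℝ), 0 ≤ q s)
    (hq_int : IntegrableOn (fun s => G s s * p s * q s) (Ici 0))
    (x : ℝ → ℝ)
    (hx : ∀ t, x t = ∫ s in Ici (0:ℝ), G t s * p s * q s)
    :
    ContinuousOn x (Ici 0) ∧
    (∀ t > 0, HasDerivAt x
      (1 / (D * p t) * (a₁ * (∫ s in Ici t, φ s * p s * q s)
        - a₂ * ∫ s in (0:ℝ)..t, θ s * p s * q s)) t) ∧
    (∀ t > 0, HasDerivAt (fun τ => p τ * deriv x τ) (-(p t * q t)) t)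
    := by
  have hD0 : D ≠ 0 := ne_of_gt hDpos
  -- the indicator of 1/p
  set f : ℝ → ℝ := (Ici (0:ℝ)).indicator (fun s => 1 / p s) with hf_def
  have hf_int : Integrable f := (integrable_indicator_iff measurableSet_Ici).mpr hp_int
  have hf_nonneg : ∀ s, 0 ≤ f s := fun s =>
    indicator_nonneg (fun u hu => one_div_nonneg.mpr (hp_pos u hu).le) s
  set F : ℝ → ℝ := fun t => ∫ s in (0:ℝ)..t, f s with hF_def
  have hF_cont : Continuous F := hf_int.continuous_primitive 0
  have hF_eq : ∀ t, 0 ≤ t → F t = ∫ s in (0:ℝ)..t, 1 / p s := by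
    intro t ht
    refine intervalIntegral.integral_congr ?_
    intro s hs
    rw [uIcc_of_le ht] at hs
    exact indicator_of_mem hs.1 _
  have hIci_eq : ∀ t, 0 ≤ t → (∫ s in Ici t, f s) = ∫ s in Ici t, 1 / p s := by
    intro t ht
    exact setIntegral_congr_fun measurableSet_Ici (fun s hs => indicator_of_mem (ht.trans hs) _)
  set I : ℝ := ∫ s in Ici (0:ℝ), f s with hI_def
  have hI : I = ∫ σ in Ici (0:ℝ), 1 / p σ := hIci_eq 0 le_rfl
  have hsplitf : ∀ t, 0 ≤ t → (∫ s in Ici t, f s) = I - F t := by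
    intro t ht
    have h1 := split_integral f hf_int.integrableOn ht
    have h2 : F t = ∫ s in (0:ℝ)..t, f s := rfl
    have h3 : I = ∫ s in Ici (0:ℝ), f s := rfl
    linarith
  have hθF : ∀ t, 0 ≤ t → θ t = b₁ + a₁ * F t := by
    intro t ht; rw [hθ t, hF_eq t ht]
  have hφF : ∀ t, 0 ≤ t → φ t = b₂ + a₂ * (I - F t) := by
    intro t ht; rw [hφ t, ← hIci_eq t ht, hsplitf t ht]
  have hF_mono : ∀ u v : ℝ, 0 ≤ u → u ≤ v → F u ≤ F v := by
    intro u v hu huv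
    have hadd := intervalIntegral.integral_add_adjacent_intervals
      (hf_int.intervalIntegrable (a := 0) (b := u)) (hf_int.intervalIntegrable (a := u) (b := v))
    have hnn : 0 ≤ ∫ s in u..v, f s :=
      intervalIntegral.integral_nonneg huv (fun s _ => hf_nonneg s)
    have : F u + ∫ s in u..v, f s = F v := hadd
    linarith
  have hF0 : F 0 = 0 := intervalIntegral.integral_same
  have hF_nonneg : ∀ t, 0 ≤ t → 0 ≤ F t := by
    intro t ht; have := hF_mono 0 t le_rfl ht; rw [hF0] at this; exact this
  have hFI : ∀ t, 0 ≤ t → F t ≤ I := by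
    intro t ht
    have h1 := hsplitf t ht
    have h2 : 0 ≤ ∫ s in Ici t, f s :=
      setIntegral_nonneg measurableSet_Ici (fun s _ => hf_nonneg s)
    linarith
  have hθ_ge : ∀ s, 0 ≤ s → b₁ ≤ θ s := by
    intro s hs; rw [hθF s hs]; nlinarith [hF_nonneg s hs]
  have hφ_ge : ∀ s, 0 ≤ s → b₂ ≤ φ s := by
    intro s hs; rw [hφF s hs]; nlinarith [hFI s hs]
  have hθ_mono : ∀ u v : ℝ, 0 ≤ u → u ≤ v → θ u ≤ θ v := by
    intro u v hu huv
    rw [hθF u hu, hθF v (hu.trans huv)]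
    nlinarith [hF_mono u v hu huv]
  have hφ_anti : ∀ u v : ℝ, 0 ≤ u → u ≤ v → φ v ≤ φ u := by
    intro u v hu huv
    rw [hφF u hu, hφF v (hu.trans huv)]
    nlinarith [hF_mono u v hu huv]
  -- continuity of θ, φ on Ici 0
  have hθ_contOn : ContinuousOn θ (Ici 0) :=
    ((continuous_const.add (continuous_const.mul hF_cont)).continuousOn).congr
      (fun t ht => hθF t ht)
  have hφ_contOn : ContinuousOn φ (Ici 0) :=
    ((continuous_const.add (continuous_const.mul (continuous_const.sub hF_cont))).continuousOn).congr
      (fun t ht => hφF t ht)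
  set hfun : ℝ → ℝ := fun s => θ s * p s * q s with hhfun_def
  set gfun : ℝ → ℝ := fun s => φ s * p s * q s with hgfun_def
  have hhfun_contOn : ContinuousOn hfun (Ici 0) := (hθ_contOn.mul hp_cont).mul hq_cont
  have hgfun_contOn : ContinuousOn gfun (Ici 0) := (hφ_contOn.mul hp_cont).mul hq_cont
  have hGss : ∀ s, G s s = (1/D) * (θ s * φ s) := by
    intro s; rw [hG s s, min_self, max_self]
  have hhfun_nonneg : ∀ s, 0 ≤ s → 0 ≤ hfun s := fun s hs =>
    mul_nonneg (mul_nonneg (hb₁.trans (hθ_ge s hs)) (hp_pos s hs).le) (hq_nonneg s hs)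
  have hgfun_nonneg : ∀ s, 0 ≤ s → 0 ≤ gfun s := fun s hs =>
    mul_nonneg (mul_nonneg (hb₂.trans (hφ_ge s hs)) (hp_pos s hs).le) (hq_nonneg s hs)
  have hGpq_nonneg : ∀ s, 0 ≤ s → 0 ≤ G s s * p s * q s := by
    intro s hs
    rw [hGss s]
    exact mul_nonneg (mul_nonneg (mul_nonneg (one_div_nonneg.mpr hDpos.le)
      (mul_nonneg (hb₁.trans (hθ_ge s hs)) (hb₂.trans (hφ_ge s hs)))) (hp_pos s hs).le)
      (hq_nonneg s hs)
  have hh_int : IntegrableOn hfun (Ici 0) := by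
    refine Integrable.mono' (hq_int.const_mul (D / b₂)) (hhfun_contOn.aestronglyMeasurable measurableSet_Ici) ?_
    rw [ae_restrict_iff' measurableSet_Ici]
    filter_upwards with s hs
    rw [Real.norm_of_nonneg (hhfun_nonneg s hs), hGss s]
    have hφs := hφ_ge s hs
    have hθs := hb₁.trans (hθ_ge s hs)
    have hps := (hp_pos s hs).le
    have hqs := hq_nonneg s hs
    have hkey : (D / b₂) * ((1/D) * (θ s * φ s) * p s * q s) = θ s * φ s * p s * q s / b₂ := by
      field_simp
    rw [hkey, le_div_iff₀ hb₂']
    show θ s * p s * q s * b₂ ≤ θ s * φ s * p s * q s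
    nlinarith [mul_nonneg (mul_nonneg (mul_nonneg hθs hps) hqs) (sub_nonneg.mpr hφs)]
  have hg_int : IntegrableOn gfun (Ici 0) := by
    refine Integrable.mono' (hq_int.const_mul (D / b₁)) (hgfun_contOn.aestronglyMeasurable measurableSet_Ici) ?_
    rw [ae_restrict_iff' measurableSet_Ici]
    filter_upwards with s hs
    rw [Real.norm_of_nonneg (hgfun_nonneg s hs), hGss s]
    have hθs := hθ_ge s hs
    have hφs := hb₂.trans (hφ_ge s hs)
    have hps := (hp_pos s hs).le
    have hqs := hq_nonneg s hs
    have hkey : (D / b₁) * ((1/D) * (θ s * φ s) * p s * q s) = θ s * φ s * p s * q s / b₁ := by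
      field_simp
    rw [hkey, le_div_iff₀ hb₁']
    show φ s * p s * q s * b₁ ≤ θ s * φ s * p s * q s
    nlinarith [mul_nonneg (mul_nonneg (mul_nonneg hφs hps) hqs) (sub_nonneg.mpr hθs)]
  set hh : ℝ → ℝ := (Ici (0:ℝ)).indicator hfun with hhh_def
  set gg : ℝ → ℝ := (Ici (0:ℝ)).indicator gfun with hgg_def
  have hhh_int : Integrable hh := (integrable_indicator_iff measurableSet_Ici).mpr hh_int
  have hgg_int : Integrable gg := (integrable_indicator_iff measurableSet_Ici).mpr hg_int
  set A : ℝ → ℝ := fun t => ∫ s in (0:ℝ)..t, hh s with hA_def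
  set C : ℝ → ℝ := fun t => ∫ s in (0:ℝ)..t, gg s with hC_def
  set J : ℝ := ∫ s in Ici (0:ℝ), gg s with hJ_def
  have hA_cont : Continuous A := hhh_int.continuous_primitive 0
  have hC_cont : Continuous C := hgg_int.continuous_primitive 0
  have hA_eq : ∀ t, 0 ≤ t → A t = ∫ s in (0:ℝ)..t, θ s * p s * q s := by
    intro t ht
    refine intervalIntegral.integral_congr ?_
    intro s hs
    rw [uIcc_of_le ht] at hs
    exact indicator_of_mem hs.1 _
  have hC_eq : ∀ t, 0 ≤ t → C t = ∫ s in (0:ℝ)..t, φ s * p s * q s := by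
    intro t ht
    refine intervalIntegral.integral_congr ?_
    intro s hs
    rw [uIcc_of_le ht] at hs
    exact indicator_of_mem hs.1 _
  have hCIci : ∀ t, 0 ≤ t → (∫ s in Ici t, φ s * p s * q s) = J - C t := by
    intro t ht
    have h1 := split_integral gg hgg_int.integrableOn ht
    have h2 : (∫ s in Ici t, gg s) = ∫ s in Ici t, φ s * p s * q s :=
      setIntegral_congr_fun measurableSet_Ici (fun s hs => indicator_of_mem (ht.trans hs) _)
    have h3 : C t = ∫ s in (0:ℝ)..t, gg s := rfl
    have h4 : J = ∫ s in Ici (0:ℝ), gg s := rfl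
    linarith
  -- derivatives of the primitives
  have hF' : ∀ t : ℝ, 0 < t → HasDerivAt F (1 / p t) t := by
    intro t ht
    exact ftc_aux (fun s => 1 / p s)
      hf_int (continuousOn_const.div hp_cont (fun s hs => (hp_pos s hs).ne')) ht
  have hA' : ∀ t : ℝ, 0 < t → HasDerivAt A (hfun t) t := by
    intro t ht; exact ftc_aux hfun hhh_int hhfun_contOn ht
  have hC' : ∀ t : ℝ, 0 < t → HasDerivAt C (gfun t) t := by
    intro t ht; exact ftc_aux gfun hgg_int hgfun_contOn ht
  -- the formula for x
  have hx_formula : ∀ t, 0 ≤ t → x t = (1/D) * (φ t * A t + θ t * (J - C t)) := by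
    intro t ht
    have hk_int : IntegrableOn (fun s => G t s * p s * q s) (Ici 0) := by
      refine Integrable.mono' hq_int ?_ ?_
      · refine ContinuousOn.aestronglyMeasurable ?_ measurableSet_Ici
        have hmin : ContinuousOn (fun s : ℝ => θ (min t s)) (Ici 0) :=
          hθ_contOn.comp ((continuous_const.min continuous_id).continuousOn)
            (fun s hs => le_min ht hs)
        have hmax : ContinuousOn (fun s : ℝ => φ (max t s)) (Ici 0) :=
          hφ_contOn.comp ((continuous_const.max continuous_id).continuousOn)
            (fun s _ => le_max_of_le_left ht)
        have hcc : ContinuousOn (fun s => (1/D) * (θ (min t s) * φ (max t s)) * p s * q s)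
            (Ici 0) := ((continuousOn_const.mul (hmin.mul hmax)).mul hp_cont).mul hq_cont
        exact hcc.congr (fun s _ => by rw [hG t s])
      · rw [ae_restrict_iff' measurableSet_Ici]
        filter_upwards with s hs
        have h0s : (0:ℝ) ≤ s := hs
        have hb : θ (min t s) * φ (max t s) ≤ θ s * φ s := by
          rcases le_total s t with hst | hst
          · rw [min_eq_right hst, max_eq_left hst]
            exact mul_le_mul_of_nonneg_left (hφ_anti s t h0s hst) (hb₁.trans (hθ_ge s h0s))
          · rw [min_eq_left hst, max_eq_right hst]
            exact mul_le_mul_of_nonneg_right (hθ_mono t s ht hst) (hb₂.trans (hφ_ge s h0s))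
        have hnn : 0 ≤ G t s * p s * q s := by
          rw [hG t s]
          exact mul_nonneg (mul_nonneg (mul_nonneg (one_div_nonneg.mpr hDpos.le)
            (mul_nonneg (hb₁.trans (hθ_ge _ (le_min ht h0s)))
              (hb₂.trans (hφ_ge _ (le_max_of_le_left ht))))) (hp_pos s hs).le) (hq_nonneg s hs)
        rw [Real.norm_of_nonneg hnn, hG t s, hGss s]
        exact mul_le_mul_of_nonneg_right (mul_le_mul_of_nonneg_right
          (mul_le_mul_of_nonneg_left hb (one_div_nonneg.mpr hDpos.le)) (hp_pos s hs).le)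
          (hq_nonneg s hs)
    rw [hx t, split_integral _ hk_int ht]
    have h1 : (∫ s in (0:ℝ)..t, G t s * p s * q s) = ((1/D) * φ t) * A t := by
      rw [hA_eq t ht, ← intervalIntegral.integral_const_mul]
      refine intervalIntegral.integral_congr ?_
      intro s hs
      rw [uIcc_of_le ht] at hs
      show G t s * p s * q s = 1 / D * φ t * (θ s * p s * q s)
      rw [hG t s, min_eq_right hs.2, max_eq_left hs.2]
      ring
    have h2 : (∫ s in Ici t, G t s * p s * q s) = ((1/D) * θ t) * (J - C t) := by
      rw [← hCIci t ht, ← integral_const_mul]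
      refine setIntegral_congr_fun measurableSet_Ici ?_
      intro s hs
      show G t s * p s * q s = 1 / D * θ t * (φ s * p s * q s)
      rw [hG t s, min_eq_left hs, max_eq_right hs]
      ring
    rw [h1, h2]; ring
  -- the global model function X
  set X : ℝ → ℝ := fun τ => (1/D) * ((b₂ + a₂ * (I - F τ)) * A τ + (b₁ + a₁ * F τ) * (J - C τ))
    with hX_def
  have hxX : EqOn x X (Ici 0) := by
    intro τ hτ
    rw [hx_formula τ hτ, hX_def]
    simp only
    rw [hφF τ hτ, hθF τ hτ]
  have hX_cont : Continuous X := by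
    apply continuous_const.mul
    exact ((continuous_const.add (continuous_const.mul (continuous_const.sub hF_cont))).mul
      hA_cont).add ((continuous_const.add (continuous_const.mul hF_cont)).mul
      (continuous_const.sub hC_cont))
  have hcont : ContinuousOn x (Ici 0) := hX_cont.continuousOn.congr hxX
  -- part 2
  have part2 : ∀ t > 0, HasDerivAt x
      (1 / (D * p t) * (a₁ * (∫ s in Ici t, φ s * p s * q s)
        - a₂ * ∫ s in (0:ℝ)..t, θ s * p s * q s)) t := by
    intro t ht
    have hpt : p t ≠ 0 := (hp_pos t ht.le).ne'
    have hφd : HasDerivAt (fun τ => b₂ + a₂ * (I - F τ)) (a₂ * (0 - 1 / p t)) t :=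
      ((hasDerivAt_const t I).sub (hF' t ht)).const_mul a₂ |>.const_add b₂
    have hθd : HasDerivAt (fun τ => b₁ + a₁ * F τ) (a₁ * (1 / p t)) t :=
      ((hF' t ht).const_mul a₁).const_add b₁
    have hJCd : HasDerivAt (fun τ => J - C τ) (0 - gfun t) t :=
      (hasDerivAt_const t J).sub (hC' t ht)
    have hXd : HasDerivAt X ((1/D) * ((a₂ * (0 - 1 / p t)) * A t
        + (b₂ + a₂ * (I - F t)) * hfun t + ((a₁ * (1 / p t)) * (J - C t)
        + (b₁ + a₁ * F t) * (0 - gfun t)))) t := by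
      exact (((hφd.mul (hA' t ht)).add (hθd.mul hJCd))).const_mul (1/D)
    have htarget : (1/D) * ((a₂ * (0 - 1 / p t)) * A t
        + (b₂ + a₂ * (I - F t)) * hfun t + ((a₁ * (1 / p t)) * (J - C t)
        + (b₁ + a₁ * F t) * (0 - gfun t)))
        = 1 / (D * p t) * (a₁ * (∫ s in Ici t, φ s * p s * q s)
          - a₂ * ∫ s in (0:ℝ)..t, θ s * p s * q s) := by
      rw [hCIci t ht.le, ← hA_eq t ht.le, hhfun_def, hgfun_def]
      simp only
      rw [hφF t ht.le, hθF t ht.le]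
      field_simp
      ring
    rw [htarget] at hXd
    refine hXd.congr_of_eventuallyEq ?_
    exact eventually_of_mem (Ioi_mem_nhds ht) (fun τ hτ => hxX (mem_Ici.mpr (le_of_lt hτ)))
  refine ⟨hcont, part2, ?_⟩
  -- part 3
  intro t ht
  set Y : ℝ → ℝ := fun τ => (1/D) * (a₁ * (J - C τ) - a₂ * A τ) with hY_def
  have hpxY : ∀ τ, 0 < τ → p τ * deriv x τ = Y τ := by
    intro τ hτ
    have hpτ : p τ ≠ 0 := (hp_pos τ hτ.le).ne'
    rw [(part2 τ hτ).deriv, hCIci τ hτ.le, ← hA_eq τ hτ.le, hY_def]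
    field_simp
  have hYd : HasDerivAt Y ((1/D) * (a₁ * (0 - gfun t) - a₂ * hfun t)) t := by
    exact (((((hasDerivAt_const t J).sub (hC' t ht)).const_mul a₁).sub
      ((hA' t ht).const_mul a₂))).const_mul (1/D)
  have hval : (1/D) * (a₁ * (0 - gfun t) - a₂ * hfun t) = -(p t * q t) := by
    have hφθ : a₁ * φ t + a₂ * θ t = D := by
      rw [hφF t ht.le, hθF t ht.le, hD, ← hI]
      ring
    have key : a₁ * gfun t + a₂ * hfun t = D * (p t * q t) := by
      rw [hhfun_def, hgfun_def]
      simp only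
      linear_combination (p t * q t) * hφθ
    field_simp
    linarith [key]
  rw [hval] at hYd
  refine hYd.congr_of_eventuallyEq ?_
  exact eventually_of_mem (Ioi_mem_nhds ht) (fun τ hτ => hpxY τ hτ)
end

section
/- The function x(t) := ∫₀^∞ G(t,s)·p(s)·σ(s) ds satisfies the homogeneous boundary conditions of the problem: a₁·x(0) − b₁·lim_{t→0⁺} p(t)·x'(t) = 0 and a₂·lim_{t→∞} x(t) + b₂·lim_{t→∞} p(t)·x'(t) = 0, where x is differentiable on (0,∞) with p(t)·x'(t) = (1/D)·(a₁·∫ₜ^∞ φ(s)·p(s)·σ(s) ds − a₂·∫₀ᵗ θ(s)·p(s)·σ(s) ds). -/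
open MeasureTheory Set Filter Topology

lemma aux_primCont (h : ℝ → ℝ) (hint : IntegrableOn h (Ici 0)) :
    ContinuousOn (fun t => ∫ s in (0:ℝ)..t, h s) (Ici 0) := by
  intro t ht
  have ht0 : (0:ℝ) ≤ t := ht
  have hsub : uIcc (0:ℝ) (t+1) ⊆ Ici 0 := by
    rw [uIcc_of_le (by linarith)]
    exact fun y hy => hy.1
  have key : ContinuousOn (fun u => ∫ s in (0:ℝ)..u, h s) (uIcc 0 (t+1)) :=
    intervalIntegral.continuousOn_primitive_interval (hint.mono_set hsub)
  have htm : t ∈ uIcc (0:ℝ) (t+1) := by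
    rw [uIcc_of_le (by linarith)]; exact ⟨ht0, by linarith⟩
  have hmem : uIcc (0:ℝ) (t+1) ∈ 𝓝[Ici 0] t := by
    rw [uIcc_of_le (by linarith)]
    have h1 : Iio (t+1) ∈ 𝓝[Ici (0:ℝ)] t :=
      mem_nhdsWithin_of_mem_nhds (Iio_mem_nhds (by linarith))
    filter_upwards [h1, self_mem_nhdsWithin] with y hy1 hy2
    exact ⟨hy2, le_of_lt hy1⟩
  exact (key t htm).mono_of_mem_nhdsWithin hmem

lemma aux_split (h : ℝ → ℝ) (hint : IntegrableOn h (Ici 0)) {t : ℝ} (ht : 0 ≤ t) :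
    ∫ s in Ici t, h s = (∫ s in Ici (0:ℝ), h s) - ∫ s in (0:ℝ)..t, h s := by
  have hu : Ico (0:ℝ) t ∪ Ici t = Ici 0 := Ico_union_Ici_eq_Ici ht
  have hd : Disjoint (Ico (0:ℝ) t) (Ici t) := by
    apply disjoint_left.2
    intro a ha ha'
    exact absurd ha' (not_le.2 ha.2)
  have h1 : IntegrableOn h (Ico 0 t) := hint.mono_set (fun y hy => hy.1)
  have h2 : IntegrableOn h (Ici t) := hint.mono_set (Ici_subset_Ici.2 ht)
  have := setIntegral_union hd measurableSet_Ici h1 h2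
  rw [hu] at this
  rw [this, intervalIntegral.integral_of_le ht,
    MeasureTheory.integral_Ico_eq_integral_Ioo, MeasureTheory.integral_Ioc_eq_integral_Ioo]
  ring

theorem stmt_15
    (p : ℝ → ℝ)
    (hp_cont : ContinuousOn p (Ici 0))
    (hp_pos : ∀ t ∈ Ici (0:ℝ), 0 < p t)
    (hp_int : IntegrableOn (fun s => 1 / p s) (Ici 0))
    (a₁ a₂ b₁ b₂ D : ℝ)
    (ha₁ : 0 ≤ a₁) (ha₂ : 0 ≤ a₂) (hb₁ : 0 ≤ b₁) (hb₂ : 0 ≤ b₂)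
    (hD : D = a₂ * b₁ + a₁ * b₂ + a₁ * a₂ * ∫ σ in Ici (0:ℝ), 1 / p σ)
    (hDpos : 0 < D)
    (θ φ : ℝ → ℝ)
    (hθ : ∀ t, θ t = b₁ + a₁ * ∫ σ in (0:ℝ)..t, 1 / p σ)
    (hφ : ∀ t, φ t = b₂ + a₂ * ∫ σ in Ici t, 1 / p σ)
    (G : ℝ → ℝ → ℝ)
    (hG : ∀ t s, G t s = (1 / D) * (θ (min t s) * φ (max t s)))
    (hb₁' : 0 < b₁) (hb₂' : 0 < b₂)
    (q : ℝ → ℝ)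
    (hq_cont : ContinuousOn q (Ici 0))
    (hq_nonneg : ∀ s ∈ Ici (0:ℝ), 0 ≤ q s)
    (hq_int : IntegrableOn (fun s => G s s * p s * q s) (Ici 0))
    (x : ℝ → ℝ)
    (hx : ∀ t, x t = ∫ s in Ici (0:ℝ), G t s * p s * q s)
    :
    (∀ t > 0, HasDerivAt x
      ((1 / D * (a₁ * (∫ s in Ici t, φ s * p s * q s)
        - a₂ * ∫ s in (0:ℝ)..t, θ s * p s * q s)) / p t) t) ∧
    (∃ ℓ, Tendsto (fun t => 1 / D * (a₁ * (∫ s in Ici t, φ s * p s * q s)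
        - a₂ * ∫ s in (0:ℝ)..t, θ s * p s * q s)) (𝓝[>] (0:ℝ)) (𝓝 ℓ) ∧
      a₁ * x 0 - b₁ * ℓ = 0) ∧
    (∃ L ℓ, Tendsto x atTop (𝓝 L) ∧
      Tendsto (fun t => 1 / D * (a₁ * (∫ s in Ici t, φ s * p s * q s)
        - a₂ * ∫ s in (0:ℝ)..t, θ s * p s * q s)) atTop (𝓝 ℓ) ∧
      a₂ * L + b₂ * ℓ = 0)
    := by
  have hDne : D ≠ 0 := ne_of_gt hDpos
  set I : ℝ := ∫ σ in Ici (0:ℝ), 1 / p σ with hI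
  have hpne : ∀ t ∈ Ici (0:ℝ), p t ≠ 0 := fun t ht => ne_of_gt (hp_pos t ht)
  have hinv_cont : ContinuousOn (fun s => 1 / p s) (Ici 0) :=
    continuousOn_const.div hp_cont hpne
  have hinv_nonneg : ∀ s ∈ Ici (0:ℝ), 0 ≤ 1 / p s := fun s hs =>
    le_of_lt (div_pos one_pos (hp_pos s hs))
  -- the primitive of 1/p
  set P : ℝ → ℝ := fun t => ∫ σ in (0:ℝ)..t, 1 / p σ with hP
  have hP_nonneg : ∀ t, 0 ≤ t → 0 ≤ P t := by
    intro t ht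
    rw [hP]
    simp only
    rw [intervalIntegral.integral_of_le ht]
    exact setIntegral_nonneg measurableSet_Ioc fun s hs => hinv_nonneg s (le_of_lt hs.1)
  have hP_le : ∀ t, 0 ≤ t → P t ≤ I := by
    intro t ht
    rw [hP, hI]
    simp only
    rw [intervalIntegral.integral_of_le ht]
    apply setIntegral_mono_set hp_int
    · exact ((ae_restrict_iff' measurableSet_Ici).2 (Eventually.of_forall hinv_nonneg))
    · exact HasSubset.Subset.eventuallyLE fun s hs => le_of_lt hs.1
  have hIciP : ∀ t, 0 ≤ t → (∫ σ in Ici t, 1 / p σ) = I - P t := by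
    intro t ht
    exact aux_split (fun σ => 1 / p σ) hp_int ht
  -- bounds for θ and φ
  have hθ_lb : ∀ t, 0 ≤ t → b₁ ≤ θ t := by
    intro t ht; rw [hθ t]; nlinarith [hP_nonneg t ht]
  have hθ_ub : ∀ t, 0 ≤ t → θ t ≤ b₁ + a₁ * I := by
    intro t ht; rw [hθ t]; nlinarith [hP_le t ht, hP_nonneg t ht]
  have hφ_lb : ∀ t, 0 ≤ t → b₂ ≤ φ t := by
    intro t ht; rw [hφ t, hIciP t ht]; nlinarith [hP_le t ht]
  have hφ_ub : ∀ t, 0 ≤ t → φ t ≤ b₂ + a₂ * I := by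
    intro t ht; rw [hφ t, hIciP t ht]; nlinarith [hP_nonneg t ht]
  have hφ_eq : ∀ t, 0 ≤ t → φ t = b₂ + a₂ * (I - P t) := by
    intro t ht; rw [hφ t, hIciP t ht]
  -- continuity of θ and φ on [0,∞)
  have hPcont : ContinuousOn P (Ici 0) := aux_primCont (fun σ => 1 / p σ) hp_int
  have hθ_cont : ContinuousOn θ (Ici 0) := by
    have : ContinuousOn (fun t => b₁ + a₁ * P t) (Ici 0) :=
      continuousOn_const.add (continuousOn_const.mul hPcont)
    exact this.congr fun t ht => hθ t
  have hφ_cont : ContinuousOn φ (Ici 0) := by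
    have : ContinuousOn (fun t => b₂ + a₂ * (I - P t)) (Ici 0) :=
      continuousOn_const.add (continuousOn_const.mul (continuousOn_const.sub hPcont))
    exact this.congr fun t ht => hφ_eq t ht
  -- diagonal of G
  have hGdiag : ∀ s, G s s * p s * q s = 1 / D * (θ s * φ s) * (p s * q s) := by
    intro s; rw [hG s s, min_self, max_self]; ring
  -- integrability of θ·p·q and φ·p·q on [0,∞)
  have hθpq_int : IntegrableOn (fun s => θ s * p s * q s) (Ici 0) := by
    apply Integrable.mono' (hq_int.const_mul (D / b₂))
    · exact ((hθ_cont.mul hp_cont).mul hq_cont).aestronglyMeasurable measurableSet_Ici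
    · rw [ae_restrict_iff' measurableSet_Ici]
      filter_upwards with s hs
      have h1 : 0 ≤ θ s * p s * q s :=
        mul_nonneg (mul_nonneg (le_trans hb₁ (hθ_lb s hs)) (hp_pos s hs).le) (hq_nonneg s hs)
      rw [Real.norm_eq_abs, abs_of_nonneg h1, hGdiag s]
      have e : D / b₂ * (1 / D * (θ s * φ s) * (p s * q s))
          = θ s * φ s * (p s * q s) / b₂ := by field_simp
      rw [e, le_div_iff₀ hb₂']
      nlinarith [hφ_lb s hs, hθ_lb s hs, hp_pos s hs, hq_nonneg s hs]
  have hφpq_int : IntegrableOn (fun s => φ s * p s * q s) (Ici 0) := by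
    apply Integrable.mono' (hq_int.const_mul (D / b₁))
    · exact ((hφ_cont.mul hp_cont).mul hq_cont).aestronglyMeasurable measurableSet_Ici
    · rw [ae_restrict_iff' measurableSet_Ici]
      filter_upwards with s hs
      have h1 : 0 ≤ φ s * p s * q s :=
        mul_nonneg (mul_nonneg (le_trans hb₂ (hφ_lb s hs)) (hp_pos s hs).le) (hq_nonneg s hs)
      rw [Real.norm_eq_abs, abs_of_nonneg h1, hGdiag s]
      have e : D / b₁ * (1 / D * (θ s * φ s) * (p s * q s))
          = θ s * φ s * (p s * q s) / b₁ := by field_simp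
      rw [e, le_div_iff₀ hb₁']
      nlinarith [hφ_lb s hs, hθ_lb s hs, hp_pos s hs, hq_nonneg s hs]
  -- primitives
  set A : ℝ → ℝ := fun u => ∫ s in (0:ℝ)..u, θ s * p s * q s with hA
  set A₂ : ℝ → ℝ := fun u => ∫ s in (0:ℝ)..u, φ s * p s * q s with hA₂
  set Cφ : ℝ := ∫ s in Ici (0:ℝ), φ s * p s * q s with hCφ
  set Ainf : ℝ := ∫ s in Ici (0:ℝ), θ s * p s * q s with hAinf
  have hB : ∀ t, 0 ≤ t → (∫ s in Ici t, φ s * p s * q s) = Cφ - A₂ t := by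
    intro t ht
    exact aux_split (fun s => φ s * p s * q s) hφpq_int ht
  have hBθ : ∀ t, 0 ≤ t → (∫ s in Ici t, θ s * p s * q s) = Ainf - A t := by
    intro t ht
    exact aux_split (fun s => θ s * p s * q s) hθpq_int ht
  -- formula for x
  have hxeq : ∀ t, 0 ≤ t → x t = 1 / D * (φ t * A t + θ t * (Cφ - A₂ t)) := by
    intro t ht
    have hIcc : Icc (0:ℝ) t ⊆ Ici 0 := fun y hy => hy.1
    have hIoi : Ioi t ⊆ Ici (0:ℝ) := fun y hy => le_trans ht (le_of_lt hy)
    have he1 : EqOn (fun s => 1 / D * φ t * (θ s * p s * q s))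
        (fun s => G t s * p s * q s) (Icc 0 t) := by
      intro s hs
      simp only [hG t s, min_eq_right hs.2, max_eq_left hs.2]
      ring
    have he2 : EqOn (fun s => 1 / D * θ t * (φ s * p s * q s))
        (fun s => G t s * p s * q s) (Ioi t) := by
      intro s hs
      simp only [hG t s, min_eq_left (le_of_lt (mem_Ioi.1 hs)), max_eq_right (le_of_lt (mem_Ioi.1 hs))]
      ring
    have hint1 : IntegrableOn (fun s => G t s * p s * q s) (Icc 0 t) :=
      IntegrableOn.congr_fun ((hθpq_int.mono_set hIcc).const_mul (1 / D * φ t))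
        he1 measurableSet_Icc
    have hint2 : IntegrableOn (fun s => G t s * p s * q s) (Ioi t) :=
      IntegrableOn.congr_fun ((hφpq_int.mono_set hIoi).const_mul (1 / D * θ t))
        he2 measurableSet_Ioi
    have hd : Disjoint (Icc (0:ℝ) t) (Ioi t) := by
      apply disjoint_left.2; intro a ha ha'; exact absurd ha.2 (not_le.2 ha')
    rw [hx t, ← Icc_union_Ioi_eq_Ici ht,
      setIntegral_union hd measurableSet_Ioi hint1 hint2]
    have e1 : ∫ s in Icc (0:ℝ) t, G t s * p s * q s = 1 / D * φ t * A t := by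
      rw [← setIntegral_congr_fun measurableSet_Icc he1, integral_const_mul,
        MeasureTheory.integral_Icc_eq_integral_Ioc, hA]
      simp only
      rw [intervalIntegral.integral_of_le ht]
    have e2 : ∫ s in Ioi t, G t s * p s * q s = 1 / D * θ t * (Cφ - A₂ t) := by
      rw [← setIntegral_congr_fun measurableSet_Ioi he2, integral_const_mul,
        ← MeasureTheory.integral_Ici_eq_integral_Ioi, hB t ht]
    rw [e1, e2]; ring
  -- Part 1: derivative
  have part1 : ∀ t > 0, HasDerivAt x
      ((1 / D * (a₁ * (∫ s in Ici t, φ s * p s * q s)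
        - a₂ * ∫ s in (0:ℝ)..t, θ s * p s * q s)) / p t) t := by
    intro t ht
    have htm : Ici (0:ℝ) ∈ 𝓝 t := mem_of_superset (Ioi_mem_nhds ht) Ioi_subset_Ici_self
    have htmem : t ∈ Ici (0:ℝ) := le_of_lt ht
    have hsmaf : ∀ (f : ℝ → ℝ), ContinuousOn f (Ici 0) →
        StronglyMeasurableAtFilter f (𝓝 t) := by
      intro f hf
      exact ⟨Ici 0, htm, hf.aestronglyMeasurable measurableSet_Ici⟩
    have hca : ∀ (f : ℝ → ℝ), ContinuousOn f (Ici 0) → ContinuousAt f t := by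
      intro f hf
      exact hf.continuousAt htm
    have hii : ∀ (f : ℝ → ℝ), IntegrableOn f (Ici 0) →
        IntervalIntegrable f volume 0 t := by
      intro f hf
      apply (hf.mono_set ?_).intervalIntegrable
      rw [uIcc_of_le (le_of_lt ht)]
      exact fun y hy => hy.1
    have hPd : HasDerivAt P (1 / p t) t :=
      intervalIntegral.integral_hasDerivAt_right (hii _ hp_int)
        (hsmaf _ hinv_cont) (hca _ hinv_cont)
    have hθd : HasDerivAt θ (a₁ * (1 / p t)) t := by
      apply HasDerivAt.congr_of_eventuallyEq ((hPd.const_mul a₁).const_add b₁)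
      exact Eventually.of_forall fun u => hθ u
    have hφd : HasDerivAt φ (-(a₂ * (1 / p t))) t := by
      have h0 : HasDerivAt (fun u => b₂ + a₂ * (I - P u)) (a₂ * -(1 / p t)) t :=
        ((hPd.const_sub I).const_mul a₂).const_add b₂
      have h1 : HasDerivAt (fun u => b₂ + a₂ * (I - P u)) (-(a₂ * (1 / p t))) t := by
        convert h0 using 1; ring
      apply h1.congr_of_eventuallyEq
      filter_upwards [htm] with u hu
      exact hφ_eq u hu
    have hAd : HasDerivAt A (θ t * p t * q t) t :=
      intervalIntegral.integral_hasDerivAt_right (hii _ hθpq_int)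
        (hsmaf _ ((hθ_cont.mul hp_cont).mul hq_cont))
        (hca _ ((hθ_cont.mul hp_cont).mul hq_cont))
    have hA₂d : HasDerivAt A₂ (φ t * p t * q t) t :=
      intervalIntegral.integral_hasDerivAt_right (hii _ hφpq_int)
        (hsmaf _ ((hφ_cont.mul hp_cont).mul hq_cont))
        (hca _ ((hφ_cont.mul hp_cont).mul hq_cont))
    have hform : HasDerivAt (fun u => 1 / D * (φ u * A u + θ u * (Cφ - A₂ u)))
        (1 / D * ((-(a₂ * (1 / p t)) * A t + φ t * (θ t * p t * q t))
          + (a₁ * (1 / p t) * (Cφ - A₂ t) + θ t * -(φ t * p t * q t)))) t :=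
      ((hφd.mul hAd).add (hθd.mul (hA₂d.const_sub Cφ))).const_mul (1 / D)
    have hxd : HasDerivAt x
        (1 / D * ((-(a₂ * (1 / p t)) * A t + φ t * (θ t * p t * q t))
          + (a₁ * (1 / p t) * (Cφ - A₂ t) + θ t * -(φ t * p t * q t)))) t := by
      apply hform.congr_of_eventuallyEq
      filter_upwards [htm] with u hu
      exact hxeq u hu
    have heq : (1 / D * (a₁ * (∫ s in Ici t, φ s * p s * q s)
        - a₂ * ∫ s in (0:ℝ)..t, θ s * p s * q s)) / p t
        = 1 / D * ((-(a₂ * (1 / p t)) * A t + φ t * (θ t * p t * q t))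
          + (a₁ * (1 / p t) * (Cφ - A₂ t) + θ t * -(φ t * p t * q t))) := by
      rw [hB t (le_of_lt ht)]
      have : (∫ s in (0:ℝ)..t, θ s * p s * q s) = A t := by rw [hA]
      rw [this]
      have hptne : p t ≠ 0 := hpne t htmem
      field_simp
      ring
    rw [heq]
    exact hxd
  refine ⟨part1, ?_, ?_⟩
  · -- Part 2: boundary at 0
    have hAcont : ContinuousOn A (Ici 0) := aux_primCont _ hθpq_int
    have hA₂cont : ContinuousOn A₂ (Ici 0) := aux_primCont _ hφpq_int
    have hA0 : A 0 = 0 := by rw [hA]; simp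
    have hA₂0 : A₂ 0 = 0 := by rw [hA₂]; simp
    have hle : 𝓝[>] (0:ℝ) ≤ 𝓝[Ici 0] 0 := nhdsWithin_mono _ Ioi_subset_Ici_self
    have htA : Tendsto A (𝓝[>] (0:ℝ)) (𝓝 0) := by
      have := (hAcont 0 self_mem_Ici).tendsto
      rw [hA0] at this
      exact this.mono_left hle
    have htA₂ : Tendsto A₂ (𝓝[>] (0:ℝ)) (𝓝 0) := by
      have := (hA₂cont 0 self_mem_Ici).tendsto
      rw [hA₂0] at this
      exact this.mono_left hle
    refine ⟨1 / D * (a₁ * (Cφ - 0) - a₂ * 0), ?_, ?_⟩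
    · have hform : Tendsto (fun t => 1 / D * (a₁ * (Cφ - A₂ t) - a₂ * A t))
          (𝓝[>] (0:ℝ)) (𝓝 (1 / D * (a₁ * (Cφ - 0) - a₂ * 0))) :=
        (((htA₂.const_sub Cφ).const_mul a₁).sub (htA.const_mul a₂)).const_mul (1 / D)
      apply hform.congr'
      filter_upwards [self_mem_nhdsWithin] with t htt
      rw [hB t (le_of_lt htt)]
    · have hx0 : x 0 = 1 / D * (φ 0 * A 0 + θ 0 * (Cφ - A₂ 0)) := hxeq 0 le_rfl
      have hθ0 : θ 0 = b₁ := by rw [hθ 0]; simp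
      rw [hx0, hA0, hA₂0, hθ0]
      ring
  · -- Part 3: behavior at infinity
    have htA : Tendsto A atTop (𝓝 Ainf) := by
      have h := MeasureTheory.intervalIntegral_tendsto_integral_Ioi 0
        (hθpq_int.mono_set Ioi_subset_Ici_self) tendsto_id
      rw [hAinf, MeasureTheory.integral_Ici_eq_integral_Ioi]
      exact h
    have htA₂ : Tendsto A₂ atTop (𝓝 Cφ) := by
      have h := MeasureTheory.intervalIntegral_tendsto_integral_Ioi 0
        (hφpq_int.mono_set Ioi_subset_Ici_self) tendsto_id
      rw [hCφ, MeasureTheory.integral_Ici_eq_integral_Ioi]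
      exact h
    have htP : Tendsto P atTop (𝓝 I) := by
      have h := MeasureTheory.intervalIntegral_tendsto_integral_Ioi 0
        (hp_int.mono_set Ioi_subset_Ici_self) tendsto_id
      rw [hI, MeasureTheory.integral_Ici_eq_integral_Ioi]
      exact h
    have htθ : Tendsto θ atTop (𝓝 (b₁ + a₁ * I)) := by
      have : Tendsto (fun t => b₁ + a₁ * P t) atTop (𝓝 (b₁ + a₁ * I)) :=
        ((htP.const_mul a₁).const_add b₁)
      exact this.congr fun t => (hθ t).symm
    have htφ : Tendsto φ atTop (𝓝 (b₂ + a₂ * (I - I))) := by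
      have h0 : Tendsto (fun t => b₂ + a₂ * (I - P t)) atTop (𝓝 (b₂ + a₂ * (I - I))) :=
        ((htP.const_sub I).const_mul a₂).const_add b₂
      apply h0.congr'
      filter_upwards [eventually_ge_atTop (0:ℝ)] with t htt
      exact (hφ_eq t htt).symm
    refine ⟨1 / D * ((b₂ + a₂ * (I - I)) * Ainf + (b₁ + a₁ * I) * (Cφ - Cφ)),
      1 / D * (a₁ * (Cφ - Cφ) - a₂ * Ainf), ?_, ?_, ?_⟩
    · have hform : Tendsto (fun t => 1 / D * (φ t * A t + θ t * (Cφ - A₂ t))) atTop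
          (𝓝 (1 / D * ((b₂ + a₂ * (I - I)) * Ainf + (b₁ + a₁ * I) * (Cφ - Cφ)))) :=
        ((htφ.mul htA).add (htθ.mul (htA₂.const_sub Cφ))).const_mul (1 / D)
      apply hform.congr'
      filter_upwards [eventually_ge_atTop (0:ℝ)] with t htt
      exact (hxeq t htt).symm
    · have hform : Tendsto (fun t => 1 / D * (a₁ * (Cφ - A₂ t) - a₂ * A t)) atTop
          (𝓝 (1 / D * (a₁ * (Cφ - Cφ) - a₂ * Ainf))) :=
        (((htA₂.const_sub Cφ).const_mul a₁).sub (htA.const_mul a₂)).const_mul (1 / D)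
      apply hform.congr'
      filter_upwards [eventually_ge_atTop (0:ℝ)] with t htt
      rw [hB t htt]
    · ring
end

section
/- The function t ↦ ∫₀^∞ G(t,s)·p(s)·k(s) ds is continuous on [0,∞), and it is bounded above by ∫₀^∞ G(s,s)·p(s)·k(s) ds. -/
open MeasureTheory Set Filter Topology

theorem stmt_16
    (p : ℝ → ℝ)
    (hp_cont : ContinuousOn p (Ici 0))
    (hp_pos : ∀ t ∈ Ici (0:ℝ), 0 < p t)
    (hp_int : IntegrableOn (fun s => 1 / p s) (Ici 0))
    (a₁ a₂ b₁ b₂ D : ℝ)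
    (ha₁ : 0 ≤ a₁) (ha₂ : 0 ≤ a₂) (hb₁ : 0 ≤ b₁) (hb₂ : 0 ≤ b₂)
    (hD : D = a₂ * b₁ + a₁ * b₂ + a₁ * a₂ * ∫ σ in Ici (0:ℝ), 1 / p σ)
    (hDpos : 0 < D)
    (θ φ : ℝ → ℝ)
    (hθ : ∀ t, θ t = b₁ + a₁ * ∫ σ in (0:ℝ)..t, 1 / p σ)
    (hφ : ∀ t, φ t = b₂ + a₂ * ∫ σ in Ici t, 1 / p σ)
    (G : ℝ → ℝ → ℝ)
    (hG : ∀ t s, G t s = (1 / D) * (θ (min t s) * φ (max t s)))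
    (k : ℝ → ℝ)
    (hk_cont : ContinuousOn k (Ici 0))
    (hk_nonneg : ∀ s ∈ Ici (0:ℝ), 0 ≤ k s)
    (hk_int : IntegrableOn (fun s => G s s * p s * k s) (Ici 0))
    (hk_pos : 0 < ∫ s in Ici (0:ℝ), G s s * p s * k s)
    :
    ContinuousOn (fun t => ∫ s in Ici (0:ℝ), G t s * p s * k s) (Ici 0) ∧
    ∀ t ∈ Ici (0:ℝ), (∫ s in Ici (0:ℝ), G t s * p s * k s) ≤ ∫ s in Ici (0:ℝ), G s s * p s * k s
    := by
  have hinv : ∀ s ∈ Ici (0:ℝ), 0 ≤ 1 / p s := fun s hs =>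
    le_of_lt (one_div_pos.2 (hp_pos s hs))
  -- interval integrability of 1/p on nonneg intervals
  have hii : ∀ x y : ℝ, 0 ≤ x → 0 ≤ y →
      IntervalIntegrable (fun s => 1 / p s) volume x y := by
    intro x y hx hy
    refine (hp_int.mono_set ?_).intervalIntegrable
    intro z hz
    exact le_trans (le_min hx hy) hz.1
  -- θ monotone
  have hθmono : ∀ x y : ℝ, 0 ≤ x → x ≤ y → θ x ≤ θ y := by
    intro x y hx hxy
    rw [hθ, hθ]
    have hadd := intervalIntegral.integral_add_adjacent_intervals
      (hii 0 x le_rfl hx) (hii x y hx (hx.trans hxy))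
    have hpos : 0 ≤ ∫ σ in x..y, 1 / p σ :=
      intervalIntegral.integral_nonneg hxy (fun u hu => hinv u (hx.trans hu.1))
    nlinarith [mul_nonneg ha₁ hpos]
  -- θ nonneg
  have hθnn : ∀ x : ℝ, 0 ≤ x → 0 ≤ θ x := by
    intro x hx
    rw [hθ]
    have : 0 ≤ ∫ σ in (0:ℝ)..x, 1 / p σ :=
      intervalIntegral.integral_nonneg hx (fun u hu => hinv u hu.1)
    positivity
  -- splitting of Ici integrals
  have hsplit : ∀ x y : ℝ, 0 ≤ x → x ≤ y →
      (∫ σ in Ici x, 1 / p σ) = (∫ σ in Ico x y, 1 / p σ) + ∫ σ in Ici y, 1 / p σ := by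
    intro x y hx hxy
    rw [← setIntegral_union (by
        exact Set.disjoint_left.2 fun z hz hz' => absurd hz.2 (not_lt.2 hz'))
      measurableSet_Ici
      (hp_int.mono_set (fun z hz => hx.trans hz.1))
      (hp_int.mono_set (fun z hz => (hx.trans hxy).trans hz)),
      Ico_union_Ici_eq_Ici hxy]
  -- φ antitone
  have hφanti : ∀ x y : ℝ, 0 ≤ x → x ≤ y → φ y ≤ φ x := by
    intro x y hx hxy
    rw [hφ, hφ]
    have h1 := hsplit x y hx hxy
    have h2 : 0 ≤ ∫ σ in Ico x y, 1 / p σ :=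
      setIntegral_nonneg measurableSet_Ico (fun s hs => hinv s (hx.trans hs.1))
    nlinarith [mul_nonneg ha₂ h2]
  -- φ nonneg
  have hφnn : ∀ x : ℝ, 0 ≤ x → 0 ≤ φ x := by
    intro x hx
    rw [hφ]
    have : 0 ≤ ∫ σ in Ici x, 1 / p σ :=
      setIntegral_nonneg measurableSet_Ici (fun s hs => hinv s (hx.trans hs))
    positivity
  -- G nonneg
  have hGnn : ∀ t ∈ Ici (0:ℝ), ∀ s ∈ Ici (0:ℝ), 0 ≤ G t s := by
    intro t ht s hs
    rw [hG]
    have h1 := hθnn _ (le_min ht hs)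
    have h2 := hφnn _ (le_trans ht (le_max_left t s))
    positivity
  -- G t s ≤ G s s
  have hGle : ∀ t ∈ Ici (0:ℝ), ∀ s ∈ Ici (0:ℝ), G t s ≤ G s s := by
    intro t ht s hs
    rw [hG, hG, min_self, max_self]
    refine mul_le_mul_of_nonneg_left ?_ (by positivity)
    exact mul_le_mul (hθmono _ _ (le_min ht hs) (min_le_right t s))
      (hφanti _ _ hs (le_max_right t s)) (hφnn _ (le_trans hs (le_max_right t s)))
      (hθnn _ hs)
  -- primitive continuity
  have hprimc : ContinuousOn (fun x => ∫ σ in Ioc 0 x, 1 / p σ) (Ici 0) := by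
    intro x hx
    have hx1 : x < x + 1 := by linarith
    have hIcc : ContinuousOn (fun y => ∫ σ in Ioc 0 y, 1 / p σ) (Icc 0 (x + 1)) :=
      intervalIntegral.continuousOn_primitive
        (hp_int.mono_set (fun z hz => hz.1))
    have hmem : Icc (0:ℝ) (x + 1) ∈ 𝓝[Ici 0] x := by
      refine Filter.mem_of_superset
        (inter_mem_nhdsWithin (Ici 0) (Iio_mem_nhds hx1)) ?_
      exact fun z hz => ⟨hz.1, le_of_lt hz.2⟩
    exact (hIcc x ⟨hx, le_of_lt hx1⟩).mono_of_mem_nhdsWithin hmem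
  -- θ continuous on Ici 0
  have hθc : ContinuousOn θ (Ici 0) := by
    have : EqOn θ (fun x => b₁ + a₁ * ∫ σ in Ioc 0 x, 1 / p σ) (Ici 0) := by
      intro x hx
      rw [hθ, intervalIntegral.integral_of_le hx]
    exact (continuousOn_const.add (continuousOn_const.mul hprimc)).congr this
  -- φ continuous on Ici 0
  have hφc : ContinuousOn φ (Ici 0) := by
    have : EqOn φ
        (fun x => b₂ + a₂ * ((∫ σ in Ici (0:ℝ), 1 / p σ) - ∫ σ in Ioc 0 x, 1 / p σ))
        (Ici 0) := by
      intro x hx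
      have h1 := hsplit 0 x le_rfl hx
      have h2 : (∫ σ in Ico (0:ℝ) x, 1 / p σ) = ∫ σ in Ioc 0 x, 1 / p σ := by
        rw [integral_Ico_eq_integral_Ioo, integral_Ioc_eq_integral_Ioo]
      simp only [hφ]
      have h3 : (∫ σ in Ici x, 1 / p σ)
          = (∫ σ in Ici (0:ℝ), 1 / p σ) - ∫ σ in Ioc 0 x, 1 / p σ := by linarith
      rw [h3]
    exact (continuousOn_const.add (continuousOn_const.mul
      (continuousOn_const.sub hprimc))).congr this
  -- continuity of s ↦ G t s * p s * k s on Ici 0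
  have hmeas : ∀ t ∈ Ici (0:ℝ), ContinuousOn (fun s => G t s * p s * k s) (Ici 0) := by
    intro t ht
    have h1 : ContinuousOn (fun s => θ (min t s)) (Ici 0) :=
      hθc.comp (continuous_const.min continuous_id).continuousOn
        (fun s hs => Set.mem_Ici.2 (le_min ht hs))
    have h2 : ContinuousOn (fun s => φ (max t s)) (Ici 0) :=
      hφc.comp (continuous_const.max continuous_id).continuousOn
        (fun s hs => le_trans ht (le_max_left t s))
    have : EqOn (fun s => G t s * p s * k s)
        (fun s => (1 / D) * (θ (min t s) * φ (max t s)) * p s * k s) (Ici 0) := by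
      intro s _; simp only [hG]
    exact (((continuousOn_const.mul (h1.mul h2)).mul hp_cont).mul hk_cont).congr this
  -- continuity of t ↦ G t s * p s * k s on Ici 0
  have hmeast : ∀ s ∈ Ici (0:ℝ), ContinuousOn (fun t => G t s * p s * k s) (Ici 0) := by
    intro s hs
    have h1 : ContinuousOn (fun t => θ (min t s)) (Ici 0) :=
      hθc.comp (continuous_id.min continuous_const).continuousOn
        (fun t ht => Set.mem_Ici.2 (le_min ht hs))
    have h2 : ContinuousOn (fun t => φ (max t s)) (Ici 0) :=
      hφc.comp (continuous_id.max continuous_const).continuousOn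
        (fun t ht => le_trans hs (le_max_right t s))
    have : EqOn (fun t => G t s * p s * k s)
        (fun t => (1 / D) * (θ (min t s) * φ (max t s)) * p s * k s) (Ici 0) := by
      intro t _; simp only [hG]
    exact (((continuousOn_const.mul (h1.mul h2)).mul continuousOn_const).mul
      continuousOn_const).congr this
  -- the pointwise bound (with products)
  have hptle : ∀ t ∈ Ici (0:ℝ), ∀ s ∈ Ici (0:ℝ),
      G t s * p s * k s ≤ G s s * p s * k s := by
    intro t ht s hs
    exact mul_le_mul_of_nonneg_right
      (mul_le_mul_of_nonneg_right (hGle t ht s hs) (le_of_lt (hp_pos s hs)))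
      (hk_nonneg s hs)
  have hptnn : ∀ t ∈ Ici (0:ℝ), ∀ s ∈ Ici (0:ℝ), 0 ≤ G t s * p s * k s := by
    intro t ht s hs
    exact mul_nonneg (mul_nonneg (hGnn t ht s hs) (le_of_lt (hp_pos s hs)))
      (hk_nonneg s hs)
  have hboundae : ∀ t ∈ Ici (0:ℝ), ∀ᵐ s ∂(volume.restrict (Ici (0:ℝ))),
      ‖G t s * p s * k s‖ ≤ G s s * p s * k s := by
    intro t ht
    refine (ae_restrict_iff' measurableSet_Ici).2 (ae_of_all _ fun s hs => ?_)
    rw [Real.norm_eq_abs, abs_of_nonneg (hptnn t ht s hs)]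
    exact hptle t ht s hs
  have haesm : ∀ t ∈ Ici (0:ℝ), AEStronglyMeasurable (fun s => G t s * p s * k s)
      (volume.restrict (Ici (0:ℝ))) := fun t ht =>
    (hmeas t ht).aestronglyMeasurable measurableSet_Ici
  have hintt : ∀ t ∈ Ici (0:ℝ), IntegrableOn (fun s => G t s * p s * k s) (Ici 0) :=
    fun t ht => hk_int.mono' (haesm t ht) (hboundae t ht)
  constructor
  · exact continuousOn_of_dominated haesm hboundae hk_int
      ((ae_restrict_iff' measurableSet_Ici).2 (ae_of_all _ fun s hs => hmeast s hs))
  · intro t ht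
    exact setIntegral_mono_on (hintt t ht) hk_int measurableSet_Ici
      (fun s hs => hptle t ht s hs)
end

section
/- The equiconvergence property holds: lim_{t→∞} ∫₀^∞ G(t,s)·p(s)·k(s) ds = ∫₀^∞ Ḡ(s)·p(s)·k(s) ds = (b₂/D)·∫₀^∞ θ(s)·p(s)·k(s) ds, where Ḡ(s) := lim_{t→∞} G(t,s) = (b₂/D)·θ(s). -/
open MeasureTheory Set Filter Topology

theorem stmt_17
    (p : ℝ → ℝ)
    (hp_cont : ContinuousOn p (Ici 0))
    (hp_pos : ∀ t ∈ Ici (0:ℝ), 0 < p t)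
    (hp_int : IntegrableOn (fun s => 1 / p s) (Ici 0))
    (a₁ a₂ b₁ b₂ D : ℝ)
    (ha₁ : 0 ≤ a₁) (ha₂ : 0 ≤ a₂) (hb₁ : 0 ≤ b₁) (hb₂ : 0 ≤ b₂)
    (hD : D = a₂ * b₁ + a₁ * b₂ + a₁ * a₂ * ∫ σ in Ici (0:ℝ), 1 / p σ)
    (hDpos : 0 < D)
    (θ φ : ℝ → ℝ)
    (hθ : ∀ t, θ t = b₁ + a₁ * ∫ σ in (0:ℝ)..t, 1 / p σ)
    (hφ : ∀ t, φ t = b₂ + a₂ * ∫ σ in Ici t, 1 / p σ)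
    (G : ℝ → ℝ → ℝ)
    (hG : ∀ t s, G t s = (1 / D) * (θ (min t s) * φ (max t s)))
    (k : ℝ → ℝ)
    (hk_cont : ContinuousOn k (Ici 0))
    (hk_nonneg : ∀ s ∈ Ici (0:ℝ), 0 ≤ k s)
    (hk_int : IntegrableOn (fun s => G s s * p s * k s) (Ici 0))
    (hk_pos : 0 < ∫ s in Ici (0:ℝ), G s s * p s * k s)
    :
    (∀ s ∈ Ici (0:ℝ), Tendsto (fun t => G t s) atTop (𝓝 (b₂ / D * θ s))) ∧
    Tendsto (fun t => ∫ s in Ici (0:ℝ), G t s * p s * k s) atTop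
      (𝓝 (∫ s in Ici (0:ℝ), (b₂ / D * θ s) * p s * k s)) ∧
    (∫ s in Ici (0:ℝ), (b₂ / D * θ s) * p s * k s) = b₂ / D * ∫ s in Ici (0:ℝ), θ s * p s * k s
    := by
  have hf_nonneg : ∀ σ ∈ Ici (0:ℝ), 0 ≤ 1 / p σ := fun σ hσ =>
    le_of_lt (one_div_pos.mpr (hp_pos σ hσ))
  -- interval integrability within [0,∞)
  have hII : ∀ u v : ℝ, 0 ≤ u → 0 ≤ v → IntervalIntegrable (fun σ => 1 / p σ) volume u v := by
    intro u v hu hv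
    rcases le_total u v with h | h
    · exact (intervalIntegrable_iff_integrableOn_Ioc_of_le h).mpr
        (hp_int.mono_set (fun x hx => le_trans hu (le_of_lt hx.1)))
    · exact ((intervalIntegrable_iff_integrableOn_Ioc_of_le h).mpr
        (hp_int.mono_set (fun x hx => le_trans hv (le_of_lt hx.1)))).symm
  -- θ is monotone on [0,∞)
  have hθmono : MonotoneOn θ (Ici 0) := by
    intro u hu v hv huv
    rw [hθ, hθ]
    have hadd : (∫ σ in (0:ℝ)..u, 1 / p σ) + (∫ σ in u..v, 1 / p σ)
        = ∫ σ in (0:ℝ)..v, 1 / p σ :=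
      intervalIntegral.integral_add_adjacent_intervals (hII 0 u le_rfl hu) (hII u v hu (le_trans hu huv))
    have hnn : 0 ≤ ∫ σ in u..v, 1 / p σ :=
      intervalIntegral.integral_nonneg huv (fun x hx => hf_nonneg x (le_trans hu hx.1))
    nlinarith [mul_nonneg ha₁ hnn]
  -- φ is antitone on [0,∞)
  have hφanti : AntitoneOn φ (Ici 0) := by
    intro u hu v hv huv
    rw [hφ, hφ]
    have hdisj : Disjoint (Ico u v) (Ici v) := by
      rw [Set.disjoint_left]
      rintro x ⟨_, h1⟩ h2
      exact absurd h2 (not_le.mpr h1)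
    have hsplit : (∫ σ in Ici u, 1 / p σ)
        = (∫ σ in Ico u v, 1 / p σ) + ∫ σ in Ici v, 1 / p σ := by
      rw [← setIntegral_union hdisj measurableSet_Ici
        (hp_int.mono_set (fun x hx => le_trans hu hx.1))
        (hp_int.mono_set (fun x hx => le_trans (le_trans hu huv) hx)),
        Ico_union_Ici_eq_Ici huv]
    have hnn : 0 ≤ ∫ σ in Ico u v, 1 / p σ :=
      setIntegral_nonneg measurableSet_Ico (fun x hx => hf_nonneg x (le_trans hu hx.1))
    nlinarith [mul_nonneg ha₂ hnn]
  -- nonnegativity of θ and φ on [0,∞)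
  have hθnn : ∀ s ∈ Ici (0:ℝ), 0 ≤ θ s := by
    intro s hs
    rw [hθ]
    have hnn : 0 ≤ ∫ σ in (0:ℝ)..s, 1 / p σ :=
      intervalIntegral.integral_nonneg hs (fun x hx => hf_nonneg x hx.1)
    nlinarith [mul_nonneg ha₁ hnn]
  have hφnn : ∀ s ∈ Ici (0:ℝ), 0 ≤ φ s := by
    intro s hs
    rw [hφ]
    have hnn : 0 ≤ ∫ σ in Ici s, 1 / p σ :=
      setIntegral_nonneg measurableSet_Ici (fun x hx => hf_nonneg x (mem_Ici.mpr (le_trans hs hx)))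
    nlinarith [mul_nonneg ha₂ hnn]
  -- the tail integral tends to 0
  have htail : Tendsto (fun t => ∫ σ in Ici t, 1 / p σ) atTop (𝓝 0) := by
    have h1 : Tendsto (fun t => ∫ σ in (0:ℝ)..t, 1 / p σ) atTop
        (𝓝 (∫ σ in Ioi (0:ℝ), 1 / p σ)) :=
      intervalIntegral_tendsto_integral_Ioi 0 (hp_int.mono_set Ioi_subset_Ici_self)
        tendsto_id
    have h2 : Tendsto (fun t => (∫ σ in Ici (0:ℝ), 1 / p σ) - ∫ σ in (0:ℝ)..t, 1 / p σ)
        atTop (𝓝 ((∫ σ in Ici (0:ℝ), 1 / p σ) - ∫ σ in Ioi (0:ℝ), 1 / p σ)) :=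
      h1.const_sub _
    have heq : (∫ σ in Ici (0:ℝ), 1 / p σ) - ∫ σ in Ioi (0:ℝ), 1 / p σ = 0 := by
      rw [integral_Ici_eq_integral_Ioi, sub_self]
    rw [heq] at h2
    refine h2.congr' ?_
    filter_upwards [eventually_ge_atTop (0:ℝ)] with t ht
    have hdisj : Disjoint (Ico (0:ℝ) t) (Ici t) := by
      rw [Set.disjoint_left]
      rintro x ⟨_, h1⟩ h2
      exact absurd h2 (not_le.mpr h1)
    have hsplit : (∫ σ in Ici (0:ℝ), 1 / p σ)
        = (∫ σ in Ico (0:ℝ) t, 1 / p σ) + ∫ σ in Ici t, 1 / p σ := by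
      rw [← setIntegral_union hdisj measurableSet_Ici
        (hp_int.mono_set (fun x hx => hx.1))
        (hp_int.mono_set (fun x hx => le_trans ht hx)),
        Ico_union_Ici_eq_Ici ht]
    rw [intervalIntegral.integral_of_le ht, integral_Ioc_eq_integral_Ioo,
      ← integral_Ico_eq_integral_Ioo]
    linarith
  -- φ tends to b₂
  have hφtend : Tendsto φ atTop (𝓝 b₂) := by
    have hfe : φ = fun t => b₂ + a₂ * ∫ σ in Ici t, 1 / p σ := funext hφ
    rw [hfe]
    simpa using ((htail.const_mul a₂).const_add b₂)
  -- Part 1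
  have part1 : ∀ s ∈ Ici (0:ℝ), Tendsto (fun t => G t s) atTop (𝓝 (b₂ / D * θ s)) := by
    intro s hs
    have h1 : Tendsto (fun t => 1 / D * (θ s * φ t)) atTop (𝓝 (1 / D * (θ s * b₂))) :=
      (hφtend.const_mul (θ s)).const_mul (1 / D)
    have h3 : 1 / D * (θ s * b₂) = b₂ / D * θ s := by ring
    rw [h3] at h1
    refine h1.congr' ?_
    filter_upwards [eventually_ge_atTop s] with t ht
    rw [hG, min_eq_right ht, max_eq_left ht]
  -- diagonal bound
  have hGbound : ∀ t ∈ Ici (0:ℝ), ∀ s ∈ Ici (0:ℝ), 0 ≤ G t s ∧ G t s ≤ G s s := by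
    intro t ht s hs
    have hDinv : (0:ℝ) ≤ 1 / D := by positivity
    rcases le_total t s with h | h
    · rw [hG t s, hG s s, min_eq_left h, max_eq_right h, min_self, max_self]
      refine ⟨mul_nonneg hDinv (mul_nonneg (hθnn t ht) (hφnn s hs)), ?_⟩
      exact mul_le_mul_of_nonneg_left
        (mul_le_mul_of_nonneg_right (hθmono ht hs h) (hφnn s hs)) hDinv
    · rw [hG t s, hG s s, min_eq_right h, max_eq_left h, min_self, max_self]
      refine ⟨mul_nonneg hDinv (mul_nonneg (hθnn s hs) (hφnn t ht)), ?_⟩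
      exact mul_le_mul_of_nonneg_left
        (mul_le_mul_of_nonneg_left (hφanti hs ht h) (hθnn s hs)) hDinv
  -- measurability
  have hθmeas : AEMeasurable θ (volume.restrict (Ici 0)) :=
    aemeasurable_restrict_of_monotoneOn measurableSet_Ici hθmono
  have hpk_meas : AEMeasurable (fun s => p s * k s) (volume.restrict (Ici 0)) :=
    (hp_cont.aemeasurable measurableSet_Ici).mul (hk_cont.aemeasurable measurableSet_Ici)
  have hmeas : ∀ t ∈ Ici (0:ℝ),
      AEStronglyMeasurable (fun s => G t s * p s * k s) (volume.restrict (Ici 0)) := by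
    intro t ht
    have h1 : AEMeasurable (fun s => θ (min t s)) (volume.restrict (Ici 0)) := by
      refine aemeasurable_restrict_of_monotoneOn measurableSet_Ici ?_
      intro u hu v hv huv
      exact hθmono (mem_Ici.mpr (le_min ht hu)) (mem_Ici.mpr (le_min ht hv)) (min_le_min_left t huv)
    have h2 : AEMeasurable (fun s => φ (max t s)) (volume.restrict (Ici 0)) := by
      refine aemeasurable_restrict_of_antitoneOn measurableSet_Ici ?_
      intro u hu v hv huv
      exact hφanti (le_trans ht (le_max_left t u)) (le_trans ht (le_max_left t v))
        (max_le_max_left t huv)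
    have h3 : AEMeasurable (fun s => 1 / D * (θ (min t s) * φ (max t s)) * (p s * k s))
        (volume.restrict (Ici 0)) := (((h1.mul h2).const_mul (1 / D)).mul hpk_meas)
    refine h3.aestronglyMeasurable.congr ?_
    filter_upwards with s
    rw [hG]
    ring
  -- a.e. pointwise convergence
  have hptwise : ∀ᵐ s ∂(volume.restrict (Ici (0:ℝ))),
      Tendsto (fun t => G t s * p s * k s) atTop (𝓝 ((b₂ / D * θ s) * p s * k s)) := by
    filter_upwards [ae_restrict_mem measurableSet_Ici] with s hs
    exact ((part1 s hs).mul_const (p s)).mul_const (k s)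
  -- Part 2 by dominated convergence
  have part2 : Tendsto (fun t => ∫ s in Ici (0:ℝ), G t s * p s * k s) atTop
      (𝓝 (∫ s in Ici (0:ℝ), (b₂ / D * θ s) * p s * k s)) := by
    refine tendsto_integral_filter_of_dominated_convergence (fun s => G s s * p s * k s)
      ?_ ?_ hk_int hptwise
    · filter_upwards [eventually_ge_atTop (0:ℝ)] with t ht
      exact hmeas t ht
    · filter_upwards [eventually_ge_atTop (0:ℝ)] with t ht
      filter_upwards [ae_restrict_mem measurableSet_Ici] with s hs
      obtain ⟨h0, h1⟩ := hGbound t ht s hs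
      rw [Real.norm_eq_abs, abs_of_nonneg
        (mul_nonneg (mul_nonneg h0 (hp_pos s hs).le) (hk_nonneg s hs))]
      exact mul_le_mul_of_nonneg_right
        (mul_le_mul_of_nonneg_right h1 (hp_pos s hs).le) (hk_nonneg s hs)
  -- Part 3
  have part3 : (∫ s in Ici (0:ℝ), (b₂ / D * θ s) * p s * k s)
      = b₂ / D * ∫ s in Ici (0:ℝ), θ s * p s * k s := by
    rw [← integral_const_mul]
    congr 1
    funext s
    ring
  exact ⟨part1, part2, part3⟩
end
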